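/- The HOC function lies below the quadratic and only down-weighs outlier-corrupted values: for all x ∈ ℝ, l_{γ,c}(x) ≤ x²/2, with equality if and only if |x| ≤ c. -/

import Mathlib

/-- The hybrid ordinary-Cauchy (HOC) function with parameters `γ, c > 0`. -/
noncomputable def hoc (γ c x : ℝ) : ℝ :=
  if |x| ≤ c then x ^ 2 / 2
  else (γ ^ 2 + c ^ 2) / 2 * Real.log (1 + x ^ 2 / γ ^ 2) + c ^ 2 / 2 -
    (γ ^ 2 + c ^ 2) / 2 * Real.log (1 + c ^ 2 / γ ^ 2)

lemma hoc_lt_of_gt (γ c x : ℝ) (hγ : 0 < γ) (hc : 0 < c) (hx : c < |x|) :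
    hoc γ c x < x ^ 2 / 2 := by
  have hγ2 : (0:ℝ) < γ ^ 2 := by positivity
  have hA : (0:ℝ) < γ ^ 2 + c ^ 2 := by positivity
  have hx2 : c ^ 2 < x ^ 2 := by
    have := sq_abs x
    nlinarith [abs_nonneg x]
  have hB : (0:ℝ) < γ ^ 2 + x ^ 2 := by positivity
  set r : ℝ := (γ ^ 2 + x ^ 2) / (γ ^ 2 + c ^ 2) with hr
  have hr1 : 1 < r := by
    rw [hr, lt_div_iff₀ hA]; linarith
  have hlog : Real.log r < r - 1 :=
    Real.log_lt_sub_one_of_pos (by linarith) (by linarith)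
  have e1 : (1 + x ^ 2 / γ ^ 2) = (γ ^ 2 + x ^ 2) / γ ^ 2 := by
    field_simp
  have e2 : (1 + c ^ 2 / γ ^ 2) = (γ ^ 2 + c ^ 2) / γ ^ 2 := by
    field_simp
  have hlogdiff : Real.log (1 + x ^ 2 / γ ^ 2) - Real.log (1 + c ^ 2 / γ ^ 2)
      = Real.log r := by
    rw [e1, e2, hr, Real.log_div hB.ne' hγ2.ne', Real.log_div hA.ne' hγ2.ne',
      Real.log_div hB.ne' hA.ne']
    ring
  have hne : ¬ |x| ≤ c := not_le.mpr hx
  rw [hoc, if_neg hne]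
  have key : (γ ^ 2 + c ^ 2) * Real.log r < x ^ 2 - c ^ 2 := by
    have := mul_lt_mul_of_pos_left hlog hA
    calc (γ ^ 2 + c ^ 2) * Real.log r < (γ ^ 2 + c ^ 2) * (r - 1) := this
      _ = x ^ 2 - c ^ 2 := by rw [hr]; field_simp <;> ring
  nlinarith [hlogdiff, key]

theorem hoc_le_quadratic (γ c : ℝ) (hγ : 0 < γ) (hc : 0 < c) :
    ∀ x : ℝ, hoc γ c x ≤ x ^ 2 / 2 ∧ (hoc γ c x = x ^ 2 / 2 ↔ |x| ≤ c) := by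
  intro x
  by_cases h : |x| ≤ c
  · rw [hoc, if_pos h]
    exact ⟨le_refl _, by simp [h]⟩
  · have hlt := hoc_lt_of_gt γ c x hγ hc (not_le.mp h)
    exact ⟨hlt.le, by constructor <;> intro h' <;> [exact absurd h' hlt.ne; exact absurd h' h]⟩
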